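/- For all x ∈ [-1, 1], |arcsin(x) - x| ≤ (π - 2)/2 · |x|³ ≤ (π-2)/2 · |x|. -/

import Mathlib

open Real

namespace Stmt9Aux

noncomputable def c : ℝ := (π - 2) / 2

lemma hc_lb : 0.57 < c := by unfold c; nlinarith [Real.pi_gt_d6]
lemma hc_ub : c < 0.575 := by unfold c; nlinarith [Real.pi_lt_d2]
lemma hc_pos : 0 < c := by nlinarith [hc_lb]

noncomputable def Q (u : ℝ) : ℝ := -9*c^2*u^2 + (9*c^2 - 6*c)*u + (6*c - 1)

lemma hQ_anti {u v : ℝ} (hu : 0 ≤ u) (huv : u < v) : Q v < Q u := by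
  unfold Q
  nlinarith [hc_lb, hc_ub, sq_nonneg c, mul_pos (sub_pos.mpr huv) (show (0:ℝ) < 9*c^2*(u+v) + 6*c - 9*c^2 by nlinarith [hc_lb, hc_ub])]

noncomputable def uStar : ℝ :=
  (Real.sqrt ((6*c - 9*c^2)^2 + 36*c^2*(6*c - 1)) - (6*c - 9*c^2)) / (18*c^2)

lemma hd_sq : (Real.sqrt ((6*c - 9*c^2)^2 + 36*c^2*(6*c - 1)))^2
    = (6*c - 9*c^2)^2 + 36*c^2*(6*c - 1) := by
  apply Real.sq_sqrt
  nlinarith [hc_lb, sq_nonneg (6*c - 9*c^2), sq_nonneg c]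

lemma hQ_star : Q uStar = 0 := by
  have h2 := hd_sq
  have hc2 : (0:ℝ) < c := hc_pos
  unfold Q uStar
  set d := Real.sqrt ((6*c - 9*c^2)^2 + 36*c^2*(6*c - 1))
  field_simp
  nlinarith [h2, sq_nonneg c, hc_pos]

lemma hu_pos : 0 < uStar := by
  have h2 := hd_sq
  have hd0 : 0 ≤ Real.sqrt ((6*c - 9*c^2)^2 + 36*c^2*(6*c - 1)) := Real.sqrt_nonneg _
  unfold uStar
  apply div_pos _ (by nlinarith [hc_pos])
  nlinarith [hc_lb, hc_ub, sq_nonneg c]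

lemma hu_lt_one : uStar < 1 := by
  by_contra h
  push_neg at h
  rcases eq_or_lt_of_le h with h | h
  · have : Q uStar = -1 := by rw [← h]; unfold Q; ring
    rw [hQ_star] at this; norm_num at this
  · have h1 : Q uStar < Q 1 := hQ_anti (by norm_num) h
    have h2 : Q 1 = -1 := by unfold Q; ring
    rw [hQ_star, h2] at h1; norm_num at h1

noncomputable def a : ℝ := Real.sqrt uStar

lemma ha_pos : 0 < a := Real.sqrt_pos.mpr hu_pos
lemma ha_lt_one : a < 1 := by
  have := Real.sqrt_lt_sqrt (le_of_lt hu_pos) hu_lt_one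
  simpa [a] using this
lemma ha_sq : a^2 = uStar := Real.sq_sqrt (le_of_lt hu_pos)

noncomputable def f (x : ℝ) : ℝ := c*x^3 + x - arcsin x

lemma hf_deriv {x : ℝ} (h1 : -1 < x) (h2 : x < 1) :
    HasDerivAt f (3*c*x^2 + 1 - 1/Real.sqrt (1 - x^2)) x := by
  have ha := Real.hasDerivAt_arcsin (by linarith) (ne_of_lt h2)
  have hp : HasDerivAt (fun x : ℝ => c*x^3 + x) (c*(3*x^2) + 1) x := by
    have := ((hasDerivAt_pow 3 x).const_mul c).add (hasDerivAt_id x)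
    exact this
  have : HasDerivAt f (c*(3*x^2) + 1 - 1/Real.sqrt (1 - x^2)) x := hp.sub ha
  convert this using 1
  ring

lemma hf_cont : Continuous f := by
  unfold f
  continuity

lemma hf_zero : f 0 = 0 := by simp [f]
lemma hf_one : f 1 = 0 := by
  simp only [f, Real.arcsin_one]
  unfold c; ring

lemma deriv_eq {x : ℝ} (h1 : -1 < x) (h2 : x < 1) :
    deriv f x = 3*c*x^2 + 1 - 1/Real.sqrt (1 - x^2) := (hf_deriv h1 h2).deriv

lemma sqrt_facts {x : ℝ} (h1 : -1 < x) (h2 : x < 1) :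
    0 < Real.sqrt (1 - x^2) ∧ (Real.sqrt (1 - x^2))^2 = 1 - x^2 := by
  constructor
  · apply Real.sqrt_pos.mpr; nlinarith
  · apply Real.sq_sqrt; nlinarith

lemma hmono : MonotoneOn f (Set.Icc 0 a) := by
  apply monotoneOn_of_deriv_nonneg (convex_Icc 0 a) hf_cont.continuousOn
  · rw [interior_Icc]
    intro x hx
    exact ((hf_deriv (by linarith [hx.1]) (by linarith [hx.2, ha_lt_one])).differentiableAt).differentiableWithinAt
  · rw [interior_Icc]
    intro x hx
    have hx1 : -1 < x := by linarith [hx.1]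
    have hx2 : x < 1 := by linarith [hx.2, ha_lt_one]
    rw [deriv_eq hx1 hx2]
    obtain ⟨hs_pos, hs_sq⟩ := sqrt_facts hx1 hx2
    set s := Real.sqrt (1 - x^2)
    -- Q(x^2) > 0 since x^2 < uStar
    have hxsq : x^2 < uStar := by
      rw [← ha_sq]
      exact pow_lt_pow_left₀ hx.2 (le_of_lt hx.1) (by norm_num)
    have hQx : 0 < Q (x^2) := by
      have := hQ_anti (sq_nonneg x) hxsq
      rw [hQ_star] at this; linarith
    have hident : ((3*c*x^2 + 1)*s)^2 = 1 + x^2 * Q (x^2) := by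
      unfold Q
      linear_combination (3*c*x^2 + 1)^2 * hs_sq
    have ht_pos : 0 < (3*c*x^2 + 1)*s := by
      apply mul_pos _ hs_pos
      nlinarith [hc_pos, sq_nonneg x]
    have ht1 : 1 ≤ (3*c*x^2 + 1)*s := by
      nlinarith [hident, hQx, sq_nonneg x, ht_pos]
    have : 1/s ≤ 3*c*x^2 + 1 := by
      rw [div_le_iff₀ hs_pos]; linarith
    linarith

lemma hanti : AntitoneOn f (Set.Icc a 1) := by
  apply antitoneOn_of_deriv_nonpos (convex_Icc a 1) hf_cont.continuousOn
  · rw [interior_Icc]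
    intro x hx
    exact ((hf_deriv (by linarith [hx.1, ha_pos]) hx.2).differentiableAt).differentiableWithinAt
  · rw [interior_Icc]
    intro x hx
    have hx1 : -1 < x := by linarith [hx.1, ha_pos]
    have hx2 : x < 1 := hx.2
    rw [deriv_eq hx1 hx2]
    obtain ⟨hs_pos, hs_sq⟩ := sqrt_facts hx1 hx2
    set s := Real.sqrt (1 - x^2)
    have hxsq : uStar < x^2 := by
      rw [← ha_sq]
      exact pow_lt_pow_left₀ hx.1 (le_of_lt ha_pos) (by norm_num)
    have hQx : Q (x^2) < 0 := by
      have := hQ_anti (le_of_lt hu_pos) hxsq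
      rw [hQ_star] at this; linarith
    have hident : ((3*c*x^2 + 1)*s)^2 = 1 + x^2 * Q (x^2) := by
      unfold Q
      linear_combination (3*c*x^2 + 1)^2 * hs_sq
    have ht_pos : 0 < (3*c*x^2 + 1)*s := by
      apply mul_pos _ hs_pos
      nlinarith [hc_pos, sq_nonneg x]
    have hx_pos : 0 < x := lt_trans ha_pos hx.1
    have ht1 : (3*c*x^2 + 1)*s ≤ 1 := by
      nlinarith [hident, hQx, ht_pos, mul_pos (mul_pos hx_pos hx_pos) (neg_pos.mpr hQx)]
    have : 3*c*x^2 + 1 ≤ 1/s := by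
      rw [le_div_iff₀ hs_pos]; linarith
    linarith

lemma f_nonneg {x : ℝ} (hx0 : 0 ≤ x) (hx1 : x ≤ 1) : 0 ≤ f x := by
  rcases le_total x a with h | h
  · have := hmono (Set.mem_Icc.mpr ⟨le_refl 0, le_of_lt ha_pos⟩) (Set.mem_Icc.mpr ⟨hx0, h⟩) hx0
    rwa [hf_zero] at this
  · have := hanti (Set.mem_Icc.mpr ⟨h, hx1⟩) (Set.mem_Icc.mpr ⟨le_of_lt ha_lt_one, le_refl 1⟩) hx1
    rwa [hf_one] at this

lemma key {x : ℝ} (hx0 : 0 ≤ x) (hx1 : x ≤ 1) : |arcsin x - x| ≤ c * x^3 := by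
  have hge : x ≤ arcsin x := by
    have h1 : sin (arcsin x) ≤ arcsin x := Real.sin_le (Real.arcsin_nonneg.mpr hx0)
    rwa [Real.sin_arcsin (by linarith) hx1] at h1
  rw [abs_of_nonneg (by linarith)]
  have := f_nonneg hx0 hx1
  unfold f at this
  linarith

end Stmt9Aux

/-- For all `x ∈ [-1,1]`, `|arcsin x - x| ≤ ((π-2)/2)|x|³ ≤ ((π-2)/2)|x|`. -/
theorem stmt_9 :
    ∀ x ∈ Set.Icc (-1 : ℝ) 1,
      |arcsin x - x| ≤ (π - 2) / 2 * |x| ^ 3 ∧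
        (π - 2) / 2 * |x| ^ 3 ≤ (π - 2) / 2 * |x| := by
  intro x hx
  obtain ⟨hx1, hx2⟩ := hx
  have hc : (π - 2)/2 = Stmt9Aux.c := rfl
  constructor
  · rcases le_total 0 x with h | h
    · have := Stmt9Aux.key h hx2
      rw [hc, abs_of_nonneg h]
      exact this
    · have := Stmt9Aux.key (by linarith : (0:ℝ) ≤ -x) (by linarith)
      rw [Real.arcsin_neg] at this
      rw [hc, abs_of_nonpos h]
      calc |arcsin x - x| = |-arcsin x - -x| := by rw [abs_sub_comm]; congr 1; ring
        _ ≤ Stmt9Aux.c * (-x)^3 := this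
        _ = Stmt9Aux.c * (-x)^3 := rfl
  · apply mul_le_mul_of_nonneg_left _ (by nlinarith [Stmt9Aux.hc_pos, (rfl : (π-2)/2 = Stmt9Aux.c)] : (0:ℝ) ≤ (π-2)/2)
    calc |x|^3 ≤ |x|^1 := pow_le_pow_of_le_one (abs_nonneg x) (abs_le.mpr ⟨hx1, hx2⟩) (by norm_num)
      _ = |x| := pow_one _
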